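/- The pointwise infimum construction preserves the class: given ordered values θ_(1) ≤ … ≤ θ_(n) attached to points X_(1),…,X_(n) ∈ ℝ^d satisfying the consistency condition that (θ_(1),…,θ_(n)) lies in the constraint set Q (ordered so that X_(i) ∉ Cv†({X_(j) : θ_(j) < θ_(i)})), the piecewise constant function φ̂ defined by φ̂(x) = θ_(m) for x ∈ Cv†({X_(1),…,X_(m)}) \ Cv†({X_(1),…,X_(m−1)}) and φ̂(x) = θ_(n) outside Cv†({X_(1),…,X_(n)}) is quasiconvex and decreasing, and satisfies φ̂(X_(i)) = θ_(i) for all i. -/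

import Mathlib

open Finset MeasureTheory

/-- Upper orthant of a set `A ⊆ ℝ^d`. -/
def UpOrth {d : ℕ} (A : Set (Fin d → ℝ)) : Set (Fin d → ℝ) :=
  {y | ∃ x ∈ A, x ≤ y}

/-- Upper orthant of the convex hull. -/
def CvDag {d : ℕ} (A : Set (Fin d → ℝ)) : Set (Fin d → ℝ) :=
  UpOrth (convexHull ℝ A)

/-- Quasiconvexity: all lower level sets are convex. -/
def QConv {d : ℕ} (ψ : (Fin d → ℝ) → ℝ) : Prop :=
  ∀ α : ℝ, Convex ℝ {x : Fin d → ℝ | ψ x ≤ α}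

/-- Coordinatewise decreasing. -/
def Decr {d : ℕ} (ψ : (Fin d → ℝ) → ℝ) : Prop :=
  ∀ x y : Fin d → ℝ, x ≤ y → ψ y ≤ ψ x

lemma cvdag_mono {d : ℕ} {A B : Set (Fin d → ℝ)} (h : A ⊆ B) : CvDag A ⊆ CvDag B := by
  rintro y ⟨x, hx, hxy⟩
  exact ⟨x, convexHull_mono h hx, hxy⟩

lemma cvdag_convex {d : ℕ} (A : Set (Fin d → ℝ)) : Convex ℝ (CvDag A) := by
  rintro y1 ⟨x1, hx1, hle1⟩ y2 ⟨x2, hx2, hle2⟩ a b ha hb hab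
  refine ⟨a • x1 + b • x2, (convex_convexHull ℝ A) hx1 hx2 ha hb hab, ?_⟩
  intro i
  have h1 := hle1 i
  have h2 := hle2 i
  simp only [Pi.add_apply, Pi.smul_apply, smul_eq_mul]
  nlinarith

lemma cvdag_upper {d : ℕ} {A : Set (Fin d → ℝ)} {x y : Fin d → ℝ}
    (hx : x ∈ CvDag A) (hxy : x ≤ y) : y ∈ CvDag A := by
  obtain ⟨z, hz, hzx⟩ := hx
  exact ⟨z, hz, le_trans hzx hxy⟩

lemma mem_cvdag_self {d : ℕ} {A : Set (Fin d → ℝ)} {a : Fin d → ℝ} (ha : a ∈ A) :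
    a ∈ CvDag A := ⟨a, subset_convexHull ℝ A ha, le_refl a⟩

theorem stmt_19 (d n : ℕ) (X : Fin (n + 1) → (Fin d → ℝ))
    (θ : Fin (n + 1) → ℝ) (hθ : StrictMono θ)
    (hcons : ∀ i : Fin (n + 1), X i ∉ CvDag (X '' {j | j < i})) :
    ∃ φ : (Fin d → ℝ) → ℝ,
      QConv φ ∧ Decr φ ∧
      (∀ i, φ (X i) = θ i) ∧
      (∀ (m : Fin (n + 1)) (x : Fin d → ℝ),
        x ∈ CvDag (X '' {j | j ≤ m}) → (∀ m' < m, x ∉ CvDag (X '' {j | j ≤ m'})) →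
        φ x = θ m) ∧
      (∀ x : Fin d → ℝ, x ∉ CvDag (X '' Set.univ) → φ x = θ (Fin.last n)) := by
  classical
  -- the level sets are nested
  have hnest : ∀ {m m' : Fin (n + 1)}, m ≤ m' →
      CvDag (X '' {j | j ≤ m}) ⊆ CvDag (X '' {j | j ≤ m'}) := by
    intro m m' hmm'
    exact cvdag_mono (Set.image_mono (fun j hj => le_trans hj hmm'))
  set T : (Fin d → ℝ) → Finset (Fin (n + 1)) :=
    fun x => Finset.univ.filter (fun m => x ∈ CvDag (X '' {j | j ≤ m})) with hT
  have hmemT : ∀ x m, m ∈ T x ↔ x ∈ CvDag (X '' {j | j ≤ m}) := by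
    intro x m; simp [hT]
  set φ : (Fin d → ℝ) → ℝ :=
    fun x => if h : (T x).Nonempty then θ ((T x).min' h) else θ (Fin.last n) with hφ
  -- φ value is of the form θ m, so bounded by θ last
  have hub : ∀ x, φ x ≤ θ (Fin.last n) := by
    intro x
    by_cases h : (T x).Nonempty
    · simp only [hφ, dif_pos h]
      exact hθ.monotone (Fin.le_last _)
    · simp [hφ, dif_neg h]
  -- characterization: φ x ≤ θ m ↔ x ∈ CvDag{j ≤ m} for m minimal etc.
  have hval : ∀ x (h : (T x).Nonempty), φ x = θ ((T x).min' h) := by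
    intro x h; simp [hφ, dif_pos h]
  refine ⟨φ, ?_, ?_, ?_, ?_, ?_⟩
  · -- quasiconvex
    intro α
    by_cases hlast : θ (Fin.last n) ≤ α
    · have : {x : Fin d → ℝ | φ x ≤ α} = Set.univ := by
        ext x; simp only [Set.mem_setOf_eq, Set.mem_univ, iff_true]
        exact le_trans (hub x) hlast
      rw [this]; exact convex_univ
    · push_neg at hlast
      by_cases h0 : ∃ m : Fin (n + 1), θ m ≤ α
      · set S : Finset (Fin (n + 1)) := Finset.univ.filter (fun m => θ m ≤ α) with hS
        have hSne : S.Nonempty := by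
          obtain ⟨m, hm⟩ := h0; exact ⟨m, by simp [hS, hm]⟩
        set m₀ := S.max' hSne with hm₀
        have hm₀mem : θ m₀ ≤ α := by
          have := S.max'_mem hSne; simpa [hS] using this
        have hkey : {x : Fin d → ℝ | φ x ≤ α} = CvDag (X '' {j | j ≤ m₀}) := by
          ext x
          simp only [Set.mem_setOf_eq]
          constructor
          · intro hx
            by_cases h : (T x).Nonempty
            · rw [hval x h] at hx
              have hmin : (T x).min' h ≤ m₀ := by
                apply Finset.le_max'
                simp [hS, hx]
              have := (hmemT x _).1 ((T x).min'_mem h)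
              exact hnest hmin this
            · rw [hφ] at hx; simp only [dif_neg h] at hx
              exact absurd hx (not_le.mpr hlast)
          · intro hx
            have hmT : m₀ ∈ T x := (hmemT x m₀).2 hx
            have h : (T x).Nonempty := ⟨m₀, hmT⟩
            rw [hval x h]
            exact le_trans (hθ.monotone ((T x).min'_le _ hmT)) hm₀mem
        rw [hkey]; exact cvdag_convex _
      · push_neg at h0
        have : {x : Fin d → ℝ | φ x ≤ α} = ∅ := by
          ext x; simp only [Set.mem_setOf_eq, Set.mem_empty_iff_false, iff_false, not_le]
          by_cases h : (T x).Nonempty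
          · rw [hval x h]; exact lt_of_not_ge (fun hc => absurd hc (not_le.mpr (h0 _)))
          · rw [hφ]; simp only [dif_neg h]; exact hlast
        rw [this]; exact convex_empty
  · -- decreasing
    intro x y hxy
    by_cases h : (T x).Nonempty
    · have hmx := (T x).min'_mem h
      have hmy : (T x).min' h ∈ T y :=
        (hmemT y _).2 (cvdag_upper ((hmemT x _).1 hmx) hxy)
      have hy : (T y).Nonempty := ⟨_, hmy⟩
      rw [hval x h, hval y hy]
      exact hθ.monotone (Finset.min'_le _ _ hmy)
    · rw [hφ]; simp only [dif_neg h]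
      exact hub y
  · -- φ (X i) = θ i
    intro i
    have hiT : i ∈ T (X i) :=
      (hmemT _ i).2 (mem_cvdag_self ⟨i, le_refl i, rfl⟩)
    have h : (T (X i)).Nonempty := ⟨i, hiT⟩
    rw [hval _ h]
    congr 1
    have h1 : (T (X i)).min' h ≤ i := Finset.min'_le _ _ hiT
    rcases lt_or_eq_of_le h1 with hlt | heq
    · exfalso
      have hmem := (hmemT _ _).1 ((T (X i)).min'_mem h)
      have : X i ∈ CvDag (X '' {j | j < i}) := by
        refine cvdag_mono (Set.image_mono ?_) hmem
        exact fun j hj => lt_of_le_of_lt hj hlt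
      exact hcons i this
    · exact heq
  · -- piecewise characterization
    intro m x hx hmin
    have hmT : m ∈ T x := (hmemT x m).2 hx
    have h : (T x).Nonempty := ⟨m, hmT⟩
    rw [hval x h]
    congr 1
    have h1 : (T x).min' h ≤ m := Finset.min'_le _ _ hmT
    rcases lt_or_eq_of_le h1 with hlt | heq
    · exact absurd ((hmemT x _).1 ((T x).min'_mem h)) (hmin _ hlt)
    · exact heq
  · -- outside
    intro x hx
    have h : ¬ (T x).Nonempty := by
      rintro ⟨m, hm⟩
      exact hx (cvdag_mono (Set.image_mono (Set.subset_univ _)) ((hmemT x m).1 hm))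
    rw [hφ]; simp [dif_neg h]
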